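/- arXiv:2107.12301 — 5 statements merged into one kernel-verified Lean document; each statement's English description precedes it below -/
import Mathlib

section
/- Suppose g : ℝ^{d₁} × ℝ^{d₂} → ℝ is differentiable, y ↦ g(x,y) is μ-strongly convex for every x (μ > 0) with unique minimizer y*(x), and the partial gradient satisfies ‖∇_y g(x₁,y) − ∇_y g(x₂,y)‖ ≤ L‖x₁ − x₂‖ for all x₁, x₂ ∈ ℝ^{d₁} and y ∈ ℝ^{d₂}. Then the minimizer map is κ-Lipschitz with κ = L/μ: ‖y*(x₁) − y*(x₂)‖ ≤ (L/μ)‖x₁ − x₂‖ for all x₁, x₂. -/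
open scoped RealInnerProductSpace

variable {d₁ d₂ : ℕ}

local notation "E₁" => EuclideanSpace ℝ (Fin d₁)
local notation "E₂" => EuclideanSpace ℝ (Fin d₂)

/-- If `y ↦ g(x,y)` is `μ`-strongly convex for every `x` with unique minimizer `y*(x)`, and
`∇_y g` is `L`-Lipschitz in `x`, then the minimizer map is `(L/μ)`-Lipschitz. -/
theorem minimizer_map_lipschitz
    (hd₁ : 0 < d₁) (hd₂ : 0 < d₂)
    (μ L : ℝ) (hμ : 0 < μ)
    (g : E₁ → E₂ → ℝ) (ggy : E₁ → E₂ → E₂) (ystar : E₁ → E₂)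
    (hgdiff : Differentiable ℝ (fun p : E₁ × E₂ => g p.1 p.2))
    (hggy : ∀ x y, HasGradientAt (fun y' => g x y') (ggy x y) y)
    (hsc : ∀ (x : E₁) (y y' : E₂),
      g x y + ⟪ggy x y, y' - y⟫ + μ / 2 * ‖y' - y‖ ^ 2 ≤ g x y')
    (hLip : ∀ (x₁ x₂ : E₁) (y : E₂), ‖ggy x₁ y - ggy x₂ y‖ ≤ L * ‖x₁ - x₂‖)
    (hmin : ∀ x y, g x (ystar x) ≤ g x y) :
    ∀ x₁ x₂ : E₁, ‖ystar x₁ - ystar x₂‖ ≤ L / μ * ‖x₁ - x₂‖ := by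
  -- gradient vanishes at the minimizer
  have hzero : ∀ x, ggy x (ystar x) = 0 := by
    intro x
    have hloc : IsLocalMin (fun y' => g x y') (ystar x) :=
      Filter.Eventually.of_forall (hmin x)
    have hfd := (hggy x (ystar x)).hasFDerivAt
    have h0 := hloc.hasFDerivAt_eq_zero hfd
    have := congrArg (fun f => (InnerProductSpace.toDual ℝ _).symm f) h0
    simpa using this
  intro x₁ x₂
  set y₁ := ystar x₁
  set y₂ := ystar x₂
  have h1 := hsc x₁ y₁ y₂
  have h2 := hsc x₁ y₂ y₁
  rw [hzero x₁] at h1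
  simp only [inner_zero_left] at h1
  -- key inequality: μ ‖y₁ - y₂‖² ≤ ⟪ggy x₁ y₂, y₂ - y₁⟫
  have hnorm : ‖y₂ - y₁‖ = ‖y₁ - y₂‖ := by rw [norm_sub_rev]
  have hkey : μ * ‖y₁ - y₂‖ ^ 2 ≤ ⟪ggy x₁ y₂, y₂ - y₁⟫ := by
    have : ⟪ggy x₁ y₂, y₁ - y₂⟫ = - ⟪ggy x₁ y₂, y₂ - y₁⟫ := by
      rw [← inner_neg_right]; congr 1; abel
    rw [this] at h2
    rw [hnorm] at h1
    linarith
  -- bound the inner product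
  have hsub : ggy x₁ y₂ - ggy x₂ y₂ = ggy x₁ y₂ := by rw [hzero x₂, sub_zero]
  have hbound : ⟪ggy x₁ y₂, y₂ - y₁⟫ ≤ L * ‖x₁ - x₂‖ * ‖y₁ - y₂‖ := by
    calc ⟪ggy x₁ y₂, y₂ - y₁⟫ ≤ ‖ggy x₁ y₂‖ * ‖y₂ - y₁‖ := real_inner_le_norm _ _
      _ ≤ L * ‖x₁ - x₂‖ * ‖y₁ - y₂‖ := by
          rw [hnorm]
          have := hLip x₁ x₂ y₂
          rw [hsub] at this
          exact mul_le_mul_of_nonneg_right this (norm_nonneg _)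
  have hLx : 0 ≤ L * ‖x₁ - x₂‖ := le_trans (norm_nonneg _) (hLip x₁ x₂ 0)
  rcases eq_or_lt_of_le (norm_nonneg (y₁ - y₂)) with h0 | hpos
  · rw [← h0]
    rw [div_mul_eq_mul_div]; exact div_nonneg hLx hμ.le
  · have : μ * ‖y₁ - y₂‖ ^ 2 ≤ L * ‖x₁ - x₂‖ * ‖y₁ - y₂‖ := hkey.trans hbound
    rw [div_mul_eq_mul_div, le_div_iff₀ hμ]
    nlinarith [this, hpos]
end

section
/- Let λ > 0, K ≥ 1, fix y⁰ ∈ ℝ^{d₂}, and define the gradient-descent maps y^0(x) = y⁰ and y^k(x) = y^{k−1}(x) − λ∇_y g(x, y^{k−1}(x)) for k = 1, …, K. Then the function x ↦ f(x, y^K(x)) is differentiable, and its gradient at x equals ∇_x f(x, y^K(x)) − λ Σ_{k=0}^{K−1} ∇²_{xy} g(x, y^k(x)) · [Π_{j=k+1}^{K−1} (I − λ∇²_{yy} g(x, y^j(x)))] · ∇_y f(x, y^K(x)), where the matrix product is taken in order of increasing j from left to right and equals the identity when k = K−1. -/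
open scoped RealInnerProductSpace

variable {d₁ d₂ : ℕ}

local notation "E₁" => EuclideanSpace ℝ (Fin d₁)
local notation "E₂" => EuclideanSpace ℝ (Fin d₂)

/-- The gradient-descent maps `y^0(x) = y⁰`, `y^k(x) = y^{k-1}(x) - λ ∇_y g(x, y^{k-1}(x))`. -/
noncomputable def gdSeq (ggy : E₁ → E₂ → E₂) (lam : ℝ) (y0 : E₂) : ℕ → E₁ → E₂
  | 0 => fun _ => y0
  | k + 1 => fun x => gdSeq ggy lam y0 k x - lam • ggy x (gdSeq ggy lam y0 k x)

/-- The backward product `Π_{j=k+1}^{K-1} (I - λ ∇²_{yy} g(x, y^j(x)))`. -/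
noncomputable def Pmat (Hyy : E₁ → E₂ → E₂ →L[ℝ] E₂) (ggy : E₁ → E₂ → E₂) (lam : ℝ)
    (y0 : E₂) (x : E₁) (K k : ℕ) : E₂ →L[ℝ] E₂ :=
  ((List.range (K - 1 - k)).map
    (fun i => (1 : E₂ →L[ℝ] E₂) - lam • Hyy x (gdSeq ggy lam y0 (k + 1 + i) x))).prod

/-- The total derivative of `x ↦ y^K(x)`, in closed form. -/
noncomputable def Dmat (Hyy : E₁ → E₂ → E₂ →L[ℝ] E₂) (Gxy : E₁ → E₂ → E₂ →L[ℝ] E₁)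
    (ggy : E₁ → E₂ → E₂) (lam : ℝ) (y0 : E₂) (K : ℕ) (x : E₁) : E₁ →L[ℝ] E₂ :=
  ∑ k ∈ Finset.range K, (-lam) • ContinuousLinearMap.adjoint
    ((Gxy x (gdSeq ggy lam y0 k x)).comp (Pmat Hyy ggy lam y0 x K k))

theorem Dmat_succ (Hyy : E₁ → E₂ → E₂ →L[ℝ] E₂) (Gxy : E₁ → E₂ → E₂ →L[ℝ] E₁)
    (ggy : E₁ → E₂ → E₂) (lam : ℝ) (y0 : E₂) (K : ℕ) (x : E₁)
    (hsa : ∀ y, ContinuousLinearMap.adjoint (Hyy x y) = Hyy x y) :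
    Dmat Hyy Gxy ggy lam y0 (K + 1) x =
      ((1 : E₂ →L[ℝ] E₂) - lam • Hyy x (gdSeq ggy lam y0 K x)).comp
          (Dmat Hyy Gxy ggy lam y0 K x) -
        lam • ContinuousLinearMap.adjoint (Gxy x (gdSeq ggy lam y0 K x)) := by
  set Q : E₂ →L[ℝ] E₂ := (1 : E₂ →L[ℝ] E₂) - lam • Hyy x (gdSeq ggy lam y0 K x) with hQ
  have hQa : ContinuousLinearMap.adjoint Q = Q := by
    rw [hQ, map_sub, map_smul, hsa]
    congr 1
    exact ContinuousLinearMap.adjoint_id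
  have h1 : Pmat Hyy ggy lam y0 x (K + 1) K = 1 := by
    simp [Pmat]
  have h2 : ∀ k, k < K → Pmat Hyy ggy lam y0 x (K + 1) k
      = (Pmat Hyy ggy lam y0 x K k).comp Q := by
    intro k hk
    have e1 : K + 1 - 1 - k = (K - 1 - k) + 1 := by omega
    have e2 : k + 1 + (K - 1 - k) = K := by omega
    simp only [Pmat, e1, List.range_succ, List.map_append, List.prod_append, e2,
      List.map_cons, List.map_nil, List.prod_cons, List.prod_nil, mul_one]
    rfl
  rw [Dmat, Finset.sum_range_succ, h1]
  rw [Finset.sum_congr rfl (fun k hk => by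
    rw [h2 k (Finset.mem_range.1 hk), ← ContinuousLinearMap.comp_assoc,
      ContinuousLinearMap.adjoint_comp, hQa, ← ContinuousLinearMap.comp_smul]),
    ← ContinuousLinearMap.comp_finset_sum, ContinuousLinearMap.one_def, ContinuousLinearMap.comp_id, neg_smul, sub_eq_add_neg]
  rfl

set_option maxHeartbeats 1000000 in
/-- The function `x ↦ f(x, y^K(x))` is differentiable with gradient
`∇ₓ f(x, y^K(x)) − λ Σ_{k=0}^{K−1} ∇²_{xy} g(x,y^k(x)) [Π_{j=k+1}^{K−1} (I − λ∇²_{yy} g(x,y^j(x)))]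
∇_y f(x, y^K(x))`, the matrix product taken in increasing order of `j` from left to right
(the identity when `k = K−1`). -/
theorem gradient_of_iterative_differentiation
    (hd₁ : 0 < d₁) (hd₂ : 0 < d₂)
    (f g : E₁ → E₂ → ℝ)
    (gfx : E₁ → E₂ → E₁) (gfy : E₁ → E₂ → E₂)
    (ggy : E₁ → E₂ → E₂)
    (Hyy : E₁ → E₂ → E₂ →L[ℝ] E₂) (Gxy : E₁ → E₂ → E₂ →L[ℝ] E₁)
    (hf : ContDiff ℝ 2 (fun p : E₁ × E₂ => f p.1 p.2))
    (hg : ContDiff ℝ 2 (fun p : E₁ × E₂ => g p.1 p.2))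
    (hgfx : ∀ x y, HasGradientAt (fun x' => f x' y) (gfx x y) x)
    (hgfy : ∀ x y, HasGradientAt (fun y' => f x y') (gfy x y) y)
    (hggy : ∀ x y, HasGradientAt (fun y' => g x y') (ggy x y) y)
    (hHyy : ∀ x y, HasFDerivAt (fun y' => ggy x y') (Hyy x y) y)
    (hGxy : ∀ x y, HasFDerivAt (fun x' => ggy x' y) (ContinuousLinearMap.adjoint (Gxy x y)) x)
    (lam : ℝ) (hlam : 0 < lam) (K : ℕ) (hK : 1 ≤ K) (y0 : E₂) :
    ∀ x : E₁,
      DifferentiableAt ℝ (fun x' => f x' (gdSeq ggy lam y0 K x')) x ∧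
      HasGradientAt (fun x' => f x' (gdSeq ggy lam y0 K x'))
        (gfx x (gdSeq ggy lam y0 K x) -
          lam • ∑ k ∈ Finset.range K,
            Gxy x (gdSeq ggy lam y0 k x)
              ((((List.range (K - 1 - k)).map
                    (fun i => (1 : E₂ →L[ℝ] E₂) -
                      lam • Hyy x (gdSeq ggy lam y0 (k + 1 + i) x))).prod)
                (gfy x (gdSeq ggy lam y0 K x)))) x := by
  -- self-adjointness of the Hessian `Hyy`
  have hsa : ∀ x y, ContinuousLinearMap.adjoint (Hyy x y) = Hyy x y := by
    intro x y
    let T : E₂ →L[ℝ] StrongDual ℝ E₂ :=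
      LinearMap.mkContinuous
        { toFun := fun v => InnerProductSpace.toDual ℝ _ v
          map_add' := fun a b => by simp
          map_smul' := fun c a => by simp }
        1 (fun v => by simp)
    have hsymm : ∀ v w : E₂, ⟪Hyy x y v, w⟫ = ⟪Hyy x y w, v⟫ := by
      intro v w
      have hf' : ∀ y' : E₂, HasFDerivAt (fun y'' => g x y'') (T (ggy x y')) y' := fun y' =>
        (hggy x y').hasFDerivAt
      have hx : HasFDerivAt (fun y' => T (ggy x y')) (T.comp (Hyy x y)) y :=
        T.hasFDerivAt.comp y (hHyy x y)
      have h := second_derivative_symmetric hf' hx v w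
      simpa [T, LinearMap.mkContinuous_apply, InnerProductSpace.toDual_apply_apply] using h
    refine (ContinuousLinearMap.eq_adjoint_iff (Hyy x y) (Hyy x y)).2 ?_ |>.symm
    intro v w
    rw [hsymm v w, real_inner_comm]
  -- joint C¹ smoothness of `ggy`
  have hggyC1 : ContDiff ℝ 1 (fun p : E₁ × E₂ => ggy p.1 p.2) := by
    have hfd : ContDiff ℝ 1 (fun p : E₁ × E₂ =>
        (fderiv ℝ (fun q : E₁ × E₂ => g q.1 q.2) p).comp (ContinuousLinearMap.inr ℝ E₁ E₂)) :=
      (hg.fderiv_right (by norm_num)).clm_comp contDiff_const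
    have key : ∀ p : E₁ × E₂, ggy p.1 p.2 = (InnerProductSpace.toDual ℝ E₂).symm
        ((fderiv ℝ (fun q : E₁ × E₂ => g q.1 q.2) p).comp (ContinuousLinearMap.inr ℝ E₁ E₂)) := by
      intro p
      have h1 : HasFDerivAt (fun y' => g p.1 y')
          ((fderiv ℝ (fun q : E₁ × E₂ => g q.1 q.2) p).comp (ContinuousLinearMap.inr ℝ E₁ E₂))
          p.2 :=
        (((hg.differentiable (by norm_num) p).hasFDerivAt).comp (f := fun y' => (p.1, y')) p.2
          (hasFDerivAt_prodMk_right p.1 p.2) :)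
      have h2 := (hggy p.1 p.2).hasFDerivAt
      rw [← h2.unique h1]
      simp
    rw [show (fun p : E₁ × E₂ => ggy p.1 p.2) = fun p => (InnerProductSpace.toDual ℝ E₂).symm
        ((fderiv ℝ (fun q : E₁ × E₂ => g q.1 q.2) p).comp (ContinuousLinearMap.inr ℝ E₁ E₂))
      from funext key]
    exact (LinearIsometryEquiv.contDiff _).comp hfd
  -- `gdSeq K` has derivative `Dmat K x` at every `x`
  have hY : ∀ K x, HasFDerivAt (gdSeq ggy lam y0 K) (Dmat Hyy Gxy ggy lam y0 K x) x := by
    intro K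
    induction K with
    | zero =>
      intro x
      have : Dmat Hyy Gxy ggy lam y0 0 x = 0 := by simp [Dmat]
      rw [this]
      exact hasFDerivAt_const y0 x
    | succ K ih =>
      intro x
      have hYK := ih x
      set D := Dmat Hyy Gxy ggy lam y0 K x with hD
      set yK := gdSeq ggy lam y0 K x with hyK
      have hpair : HasFDerivAt (fun x' => (x', gdSeq ggy lam y0 K x'))
          ((ContinuousLinearMap.id ℝ E₁).prod D) x := (hasFDerivAt_id x).prodMk hYK
      set L := fderiv ℝ (fun q : E₁ × E₂ => ggy q.1 q.2) (x, yK) with hL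
      have hLg : HasFDerivAt (fun q : E₁ × E₂ => ggy q.1 q.2) L (x, yK) :=
        ((hggyC1.differentiable (by norm_num)) (x, yK)).hasFDerivAt
      have hcomp : HasFDerivAt (fun x' => ggy x' (gdSeq ggy lam y0 K x'))
          (L.comp ((ContinuousLinearMap.id ℝ E₁).prod D)) x := (hLg.comp x hpair :)
      have hinl : L.comp (ContinuousLinearMap.inl ℝ E₁ E₂)
          = ContinuousLinearMap.adjoint (Gxy x yK) := by
        have ha : HasFDerivAt (fun x' => ggy x' yK)
            (L.comp (ContinuousLinearMap.inl ℝ E₁ E₂)) x :=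
          (hLg.comp (f := fun e => (e, yK)) x (hasFDerivAt_prodMk_left x yK) :)
        exact ha.unique (hGxy x yK)
      have hinr : L.comp (ContinuousLinearMap.inr ℝ E₁ E₂) = Hyy x yK := by
        have ha : HasFDerivAt (fun y' => ggy x y')
            (L.comp (ContinuousLinearMap.inr ℝ E₁ E₂)) yK :=
          (hLg.comp yK (hasFDerivAt_prodMk_right x yK) :)
        exact ha.unique (hHyy x yK)
      have hLeq : L.comp ((ContinuousLinearMap.id ℝ E₁).prod D)
          = ContinuousLinearMap.adjoint (Gxy x yK) + (Hyy x yK).comp D := by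
        ext u
        have : ((ContinuousLinearMap.id ℝ E₁).prod D) u
            = ContinuousLinearMap.inl ℝ E₁ E₂ u + ContinuousLinearMap.inr ℝ E₁ E₂ (D u) := by
          simp [Prod.ext_iff]
        rw [ContinuousLinearMap.comp_apply, this, map_add, ← ContinuousLinearMap.comp_apply,
          ← ContinuousLinearMap.comp_apply, hinl, hinr]
        simp
      have hstep : HasFDerivAt (gdSeq ggy lam y0 (K + 1))
          (D - lam • (ContinuousLinearMap.adjoint (Gxy x yK) + (Hyy x yK).comp D)) x := by
        have := hYK.sub ((hLeq ▸ hcomp).const_smul lam)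
        exact this
      have halg : Dmat Hyy Gxy ggy lam y0 (K + 1) x
          = D - lam • (ContinuousLinearMap.adjoint (Gxy x yK) + (Hyy x yK).comp D) := by
        rw [Dmat_succ Hyy Gxy ggy lam y0 K x (hsa x), ContinuousLinearMap.sub_comp,
          ContinuousLinearMap.smul_comp, ContinuousLinearMap.one_def,
          ContinuousLinearMap.id_comp, smul_add, sub_sub, ← hD, ← hyK]
        abel
      rw [halg]
      exact hstep
  intro x
  set yK := gdSeq ggy lam y0 K x with hyK
  set D := Dmat Hyy Gxy ggy lam y0 K x with hD
  have hpair : HasFDerivAt (fun x' => (x', gdSeq ggy lam y0 K x'))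
      ((ContinuousLinearMap.id ℝ E₁).prod D) x := (hasFDerivAt_id x).prodMk (hY K x)
  set LF := fderiv ℝ (fun q : E₁ × E₂ => f q.1 q.2) (x, yK) with hLF
  have hLf : HasFDerivAt (fun q : E₁ × E₂ => f q.1 q.2) LF (x, yK) :=
    ((hf.differentiable (by norm_num)) (x, yK)).hasFDerivAt
  have hcomp : HasFDerivAt (fun x' => f x' (gdSeq ggy lam y0 K x'))
      (LF.comp ((ContinuousLinearMap.id ℝ E₁).prod D)) x := (hLf.comp x hpair :)
  have hinl : LF.comp (ContinuousLinearMap.inl ℝ E₁ E₂)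
      = InnerProductSpace.toDual ℝ E₁ (gfx x yK) := by
    have ha : HasFDerivAt (fun x' => f x' yK)
        (LF.comp (ContinuousLinearMap.inl ℝ E₁ E₂)) x :=
      (hLf.comp (f := fun e => (e, yK)) x (hasFDerivAt_prodMk_left x yK) :)
    exact ha.unique (hgfx x yK).hasFDerivAt
  have hinr : LF.comp (ContinuousLinearMap.inr ℝ E₁ E₂)
      = InnerProductSpace.toDual ℝ E₂ (gfy x yK) := by
    have ha : HasFDerivAt (fun y' => f x y')
        (LF.comp (ContinuousLinearMap.inr ℝ E₁ E₂)) yK :=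
      (hLf.comp yK (hasFDerivAt_prodMk_right x yK) :)
    exact ha.unique (hgfy x yK).hasFDerivAt
  have hgrad : HasGradientAt (fun x' => f x' (gdSeq ggy lam y0 K x'))
      (gfx x yK - lam • ∑ k ∈ Finset.range K,
        Gxy x (gdSeq ggy lam y0 k x) (Pmat Hyy ggy lam y0 x K k (gfy x yK))) x := by
    rw [hasGradientAt_iff_hasFDerivAt]
    have heq : InnerProductSpace.toDual ℝ E₁ (gfx x yK - lam • ∑ k ∈ Finset.range K,
        Gxy x (gdSeq ggy lam y0 k x) (Pmat Hyy ggy lam y0 x K k (gfy x yK)))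
        = LF.comp ((ContinuousLinearMap.id ℝ E₁).prod D) := by
      ext u
      have hsplit : ((ContinuousLinearMap.id ℝ E₁).prod D) u
          = ContinuousLinearMap.inl ℝ E₁ E₂ u + ContinuousLinearMap.inr ℝ E₁ E₂ (D u) := by
        simp [Prod.ext_iff]
      rw [ContinuousLinearMap.comp_apply, hsplit, map_add, ← ContinuousLinearMap.comp_apply,
        ← ContinuousLinearMap.comp_apply, hinl, hinr]
      simp only [InnerProductSpace.toDual_apply_apply]
      rw [hD, Dmat]
      simp only [ContinuousLinearMap.sum_apply, ContinuousLinearMap.smul_apply, inner_sum,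
        real_inner_smul_right, ContinuousLinearMap.adjoint_inner_right,
        ContinuousLinearMap.comp_apply, inner_sub_left, real_inner_smul_left, sum_inner,
        Finset.mul_sum, neg_mul]
      rw [sub_eq_add_neg, ← Finset.sum_neg_distrib]
    rw [heq]
    exact hcomp
  have hPmat : ∀ k, Pmat Hyy ggy lam y0 x K k = (((List.range (K - 1 - k)).map
      (fun i => (1 : E₂ →L[ℝ] E₂) - lam • Hyy x (gdSeq ggy lam y0 (k + 1 + i) x))).prod) :=
    fun k => rfl
  refine ⟨hgrad.differentiableAt, ?_⟩
  simpa [hPmat] using hgrad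
end

section
/- Let z ∈ 𝒳, w ∈ ℝ^{d₁}, γ > 0, and let x⁺ be a minimizer over 𝒳 of x ↦ ⟨w, x⟩ + h(x) + (1/γ)D_ψ(x, z). Setting Ĝ = (z − x⁺)/γ, one has ⟨w, Ĝ⟩ ≥ ρ‖Ĝ‖² + (1/γ)(h(x⁺) − h(z)). -/
open scoped RealInnerProductSpace

variable {d₁ : ℕ}

local notation "E₁" => EuclideanSpace ℝ (Fin d₁)

/-- First-order lower bound for a strongly convex differentiable function. -/
theorem strong_convex_grad_lower_bound {d : ℕ} (ρ : ℝ)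
    (f : EuclideanSpace ℝ (Fin d) → ℝ) (g z x : EuclideanSpace ℝ (Fin d))
    (hf : StrongConvexOn Set.univ ρ f) (hg : HasGradientAt f g z) :
    f z + ⟪g, x - z⟫ + ρ / 2 * ‖x - z‖ ^ 2 ≤ f x := by
  set v := x - z with hv
  have hc : HasDerivAt (fun t : ℝ => z + t • v) v 0 := by
    simpa using ((hasDerivAt_id (0:ℝ)).smul_const v).const_add z
  have hg' : HasFDerivAt f ((InnerProductSpace.toDual ℝ _) g) (z + (0:ℝ) • v) := by
    simpa using hasGradientAt_iff_hasFDerivAt.mp hg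
  have hφ : HasDerivAt (fun t : ℝ => f (z + t • v)) ⟪g, v⟫ 0 :=
    by have := hg'.comp_hasDerivAt 0 hc; simpa [Function.comp_def] using this
  have hslope : Filter.Tendsto (slope (fun t : ℝ => f (z + t • v)) 0)
      (nhdsWithin 0 (Set.Ioi 0)) (nhds ⟪g, v⟫) :=
    (hasDerivAt_iff_tendsto_slope.mp hφ).mono_left
      (nhdsWithin_mono _ (fun t ht => ne_of_gt ht))
  have hrhs : Filter.Tendsto (fun t : ℝ => f x - f z - ρ / 2 * (1 - t) * ‖z - x‖ ^ 2)
      (nhdsWithin 0 (Set.Ioi 0)) (nhds (f x - f z - ρ / 2 * ‖z - x‖ ^ 2)) := by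
    have hcont : Continuous fun t : ℝ => f x - f z - ρ / 2 * (1 - t) * ‖z - x‖ ^ 2 := by
      continuity
    have : Filter.Tendsto (fun t : ℝ => f x - f z - ρ / 2 * (1 - t) * ‖z - x‖ ^ 2)
        (nhds 0) (nhds (f x - f z - ρ / 2 * (1 - 0) * ‖z - x‖ ^ 2)) := hcont.tendsto 0
    simpa using this.mono_left nhdsWithin_le_nhds
  have hev : slope (fun t : ℝ => f (z + t • v)) 0 ≤ᶠ[nhdsWithin (0:ℝ) (Set.Ioi 0)]
      fun t => f x - f z - ρ / 2 * (1 - t) * ‖z - x‖ ^ 2 := by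
    filter_upwards [Ioc_mem_nhdsGT_of_mem (Set.left_mem_Ico.mpr one_pos)] with t ht
    have hcv := hf.2 (Set.mem_univ z) (Set.mem_univ x) (by linarith [ht.2] : (0:ℝ) ≤ 1 - t)
      (le_of_lt ht.1) (by ring)
    have hzv : z + t • v = (1 - t) • z + t • x := by rw [hv]; module
    have h1 : f (z + t • v) ≤ (1 - t) * f z + t * f x - (1 - t) * t * (ρ / 2 * ‖z - x‖ ^ 2) := by
      rw [hzv]; simpa using hcv
    rw [slope_def_field]
    simp only [sub_zero, zero_smul, add_zero] at h1 ⊢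
    rw [div_le_iff₀ ht.1]
    nlinarith [ht.1]
  have hle := le_of_tendsto_of_tendsto hslope hrhs hev
  have hnn : ‖z - x‖ = ‖x - z‖ := norm_sub_rev z x
  rw [hnn] at hle
  linarith

/-- Real limit helper. -/
theorem real_limit_helper (a c : ℝ) (hc : ∀ t ∈ Set.Ioc (0:ℝ) 1, c * (1 - t) ≤ a) : c ≤ a := by
  have hlim : Filter.Tendsto (fun t : ℝ => c * (1 - t)) (nhdsWithin 0 (Set.Ioi 0)) (nhds c) := by
    have hcont : Continuous fun t : ℝ => c * (1 - t) := by continuity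
    have : Filter.Tendsto (fun t : ℝ => c * (1 - t)) (nhds 0) (nhds (c * (1 - 0))) := hcont.tendsto 0
    simpa using this.mono_left nhdsWithin_le_nhds
  refine le_of_tendsto hlim ?_
  filter_upwards [Ioc_mem_nhdsGT_of_mem (Set.left_mem_Ico.mpr one_pos)] with t ht
  exact hc t ht

/-- Mirror-descent step property: if `x⁺` minimizes `x ↦ ⟨w, x⟩ + h(x) + (1/γ)D_ψ(x, z)` over
`𝒳` and `Ĝ = (z − x⁺)/γ`, then `⟨w, Ĝ⟩ ≥ ρ‖Ĝ‖² + (1/γ)(h(x⁺) − h(z))`. -/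
theorem mirror_descent_step_inequality
    (hd₁ : 0 < d₁) (ρ : ℝ) (hρ : 0 < ρ)
    (ψ : E₁ → ℝ) (gψ : E₁ → E₁)
    (hψdiff : ∀ x, HasGradientAt ψ (gψ x) x)
    (hψsc : StrongConvexOn Set.univ ρ ψ)
    (X : Set E₁) (hXne : X.Nonempty) (hXcl : IsClosed X) (hXcv : Convex ℝ X)
    (h : E₁ → ℝ) (hh : ConvexOn ℝ Set.univ h)
    (z : E₁) (hz : z ∈ X) (w : E₁) (γ : ℝ) (hγ : 0 < γ)
    (xp : E₁) (hxp : xp ∈ X)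
    (hxpmin : ∀ u ∈ X,
      ⟪w, xp⟫ + h xp + 1 / γ * (ψ xp - ψ z - ⟪gψ z, xp - z⟫) ≤
        ⟪w, u⟫ + h u + 1 / γ * (ψ u - ψ z - ⟪gψ z, u - z⟫)) :
    ⟪w, (1 / γ) • (z - xp)⟫ ≥
      ρ * ‖(1 / γ) • (z - xp)‖ ^ 2 + 1 / γ * (h xp - h z) := by
  have hg0 : 0 < (1:ℝ) / γ := by positivity
  generalize hgdef : (1:ℝ) / γ = g at hxpmin hg0 ⊢
  set B := ‖z - xp‖ ^ 2 with hB
  set D := ψ xp - ψ z - ⟪gψ z, xp - z⟫ with hD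
  have hBnn : (0:ℝ) ≤ B := by rw [hB]; positivity
  clear_value B D
  -- Bregman lower bound
  have hDlb : ρ / 2 * B ≤ D := by
    have := strong_convex_grad_lower_bound ρ ψ (gψ z) z xp hψsc (hψdiff z)
    rw [hD, hB, norm_sub_rev z xp]; linarith
  -- optimality used along the segment
  have key : g * (ρ / 2) * B ≤ ⟪w, z - xp⟫ + (h z - h xp) - g * D := by
    rw [hD]
    apply real_limit_helper _ _
    intro t ht
    have hu : xp + t • (z - xp) ∈ X := by
      have := hXcv hxp hz (by linarith [ht.2] : (0:ℝ) ≤ 1 - t) (le_of_lt ht.1) (by ring)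
      convert this using 1
      module
    have hmin := hxpmin _ hu
    rw [hD] at hmin
    have hhcv : h ((1 - t) • xp + t • z) ≤ (1 - t) * h xp + t * h z := by
      simpa using hh.2 (Set.mem_univ xp) (Set.mem_univ z)
        (by linarith [ht.2] : (0:ℝ) ≤ 1 - t) (le_of_lt ht.1) (by ring)
    have hψcv : ψ ((1 - t) • xp + t • z) ≤
        (1 - t) * ψ xp + t * ψ z - (1 - t) * t * (ρ / 2 * ‖xp - z‖ ^ 2) := by
      simpa using hψsc.2 (Set.mem_univ xp) (Set.mem_univ z)
        (by linarith [ht.2] : (0:ℝ) ≤ 1 - t) (le_of_lt ht.1) (by ring)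
    have hrw : xp + t • (z - xp) = (1 - t) • xp + t • z := by module
    rw [hrw] at hmin
    have hinner1 : ⟪w, (1 - t) • xp + t • z⟫ = (1 - t) * ⟪w, xp⟫ + t * ⟪w, z⟫ := by
      simp [inner_add_right, inner_smul_right]
    have hinner2 : ⟪gψ z, ((1 - t) • xp + t • z) - z⟫ = (1 - t) * ⟪gψ z, xp - z⟫ := by
      have : ((1 - t) • xp + t • z) - z = (1 - t) • (xp - z) := by module
      rw [this, inner_smul_right]
    rw [hinner1, hinner2] at hmin
    have hiwz : ⟪w, z - xp⟫ = ⟪w, z⟫ - ⟪w, xp⟫ := by rw [inner_sub_right]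
    have hnB : ‖xp - z‖ ^ 2 = B := by rw [hB, norm_sub_rev]
    rw [hnB] at hψcv
    have hψcv' := mul_le_mul_of_nonneg_left hψcv (le_of_lt hg0)
    have hhcv' := hhcv
    have step : t * (g * (ρ / 2) * B * (1 - t)) ≤
        t * (⟪w, z - xp⟫ + (h z - h xp) - g * (ψ xp - ψ z - ⟪gψ z, xp - z⟫)) := by
      rw [hiwz]
      nlinarith [hmin, hhcv, hψcv']
    exact le_of_mul_le_mul_left step ht.1
  -- finish
  have h1 : g * (ρ / 2 * B) ≤ g * D := mul_le_mul_of_nonneg_left hDlb (le_of_lt hg0)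
  have hfin : g * ρ * B + (h xp - h z) ≤ ⟪w, z - xp⟫ := by nlinarith [key, h1]
  have hsm : ⟪w, g • (z - xp)⟫ = g * ⟪w, z - xp⟫ := real_inner_smul_right w _ _
  have hnm : ‖g • (z - xp)‖ ^ 2 = g ^ 2 * B := by
    rw [norm_smul, hB]; simp [abs_of_pos hg0]; ring
  rw [hsm, hnm, ge_iff_le]
  have h2 := mul_le_mul_of_nonneg_left hfin (le_of_lt hg0)
  nlinarith [h2]
end

section
/- Let z ∈ 𝒳, γ > 0, and w₁, w₂ ∈ ℝ^{d₁}. Let x₁ be the unique minimizer over 𝒳 of x ↦ ⟨w₁, x⟩ + h(x) + (1/γ)D_ψ(x, z) and x₂ the unique minimizer over 𝒳 of x ↦ ⟨w₂, x⟩ + h(x) + (1/γ)D_ψ(x, z), and set G₁ = (z − x₁)/γ and G₂ = (z − x₂)/γ. Then ‖G₁ − G₂‖ ≤ (1/ρ)‖w₁ − w₂‖. -/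
open scoped RealInnerProductSpace

variable {d₁ : ℕ}

local notation "E₁" => EuclideanSpace ℝ (Fin d₁)

lemma limit_aux {A B C : ℝ} (H : ∀ t ∈ Set.Ioo (0:ℝ) 1, C + A * (1 - t) ≤ B) : C + A ≤ B := by
  have hne : (nhdsWithin (0:ℝ) (Set.Ioo 0 1)).NeBot := by
    apply mem_closure_iff_nhdsWithin_neBot.mp
    rw [closure_Ioo one_ne_zero.symm]
    exact ⟨le_refl 0, zero_le_one⟩
  have h1 : Filter.Tendsto (fun t : ℝ => C + A * (1 - t)) (nhdsWithin 0 (Set.Ioo 0 1))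
      (nhds (C + A * (1 - 0))) :=
    Filter.Tendsto.mono_left (Continuous.tendsto (by continuity) 0) nhdsWithin_le_nhds
  have h2 : ∀ᶠ t in nhdsWithin (0:ℝ) (Set.Ioo 0 1), C + A * (1 - t) ≤ B :=
    eventually_nhdsWithin_of_forall H
  simpa using le_of_tendsto h1 h2

lemma min_growth_aux {E : Type*} [NormedAddCommGroup E] [InnerProductSpace ℝ E]
    (ρ γ : ℝ) (hρ : 0 < ρ) (hγ : 0 < γ) (ψ : E → ℝ)
    (hψsc : StrongConvexOn Set.univ ρ ψ)
    (X : Set E) (hXcv : Convex ℝ X) (h : E → ℝ) (hh : ConvexOn ℝ Set.univ h)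
    (w g z : E) (a b : E) (ha : a ∈ X) (hb : b ∈ X)
    (hmin : ∀ u ∈ X,
      ⟪w, a⟫ + h a + 1 / γ * (ψ a - ψ z - ⟪g, a - z⟫) ≤
        ⟪w, u⟫ + h u + 1 / γ * (ψ u - ψ z - ⟪g, u - z⟫)) :
    ⟪w, a⟫ + h a + 1 / γ * (ψ a - ψ z - ⟪g, a - z⟫) + ρ / (2 * γ) * ‖a - b‖ ^ 2 ≤
      ⟪w, b⟫ + h b + 1 / γ * (ψ b - ψ z - ⟪g, b - z⟫) := by
  set Fa := ⟪w, a⟫ + h a + 1 / γ * (ψ a - ψ z - ⟪g, a - z⟫) with hFa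
  set Fb := ⟪w, b⟫ + h b + 1 / γ * (ψ b - ψ z - ⟪g, b - z⟫) with hFb
  have key : ∀ t ∈ Set.Ioo (0:ℝ) 1, Fa + (ρ / (2 * γ) * ‖a - b‖ ^ 2) * (1 - t) ≤ Fb := by
    intro t ht
    obtain ⟨ht0, ht1⟩ := ht
    set s := 1 - t with hs
    have hs0 : 0 ≤ s := by simp [hs]; linarith
    have hst : s + t = 1 := by simp [hs]
    have hu : s • a + t • b ∈ X := hXcv ha hb hs0 ht0.le hst
    have hmin' := hmin _ hu
    have hinner : ⟪w, s • a + t • b⟫ = s * ⟪w, a⟫ + t * ⟪w, b⟫ := by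
      rw [inner_add_right, real_inner_smul_right, real_inner_smul_right]
    have hcvh : h (s • a + t • b) ≤ s * h a + t * h b :=
      hh.2 (Set.mem_univ a) (Set.mem_univ b) hs0 ht0.le hst
    have hcvψ : ψ (s • a + t • b) ≤ s * ψ a + t * ψ b - s * t * (ρ / 2 * ‖a - b‖ ^ 2) :=
      hψsc.2 (Set.mem_univ a) (Set.mem_univ b) hs0 ht0.le hst
    have hinner2 : ⟪g, (s • a + t • b) - z⟫ = s * ⟪g, a - z⟫ + t * ⟪g, b - z⟫ := by
      have : (s • a + t • b) - z = s • (a - z) + t • (b - z) := by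
        rw [smul_sub, smul_sub]
        rw [show s • a - s • z + (t • b - t • z) = s • a + t • b - (s • z + t • z) by abel]
        rw [← add_smul, hst, one_smul]
      rw [this, inner_add_right, real_inner_smul_right, real_inner_smul_right]
    have hγ' : (0:ℝ) < 1 / γ := by positivity
    have hub : ⟪w, s • a + t • b⟫ + h (s • a + t • b)
        + 1 / γ * (ψ (s • a + t • b) - ψ z - ⟪g, (s • a + t • b) - z⟫)
        ≤ s * Fa + t * Fb - 1 / γ * (s * t * (ρ / 2 * ‖a - b‖ ^ 2)) := by
      rw [hinner, hinner2, hFa, hFb]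
      have h1 : 1 / γ * (ψ (s • a + t • b) - ψ z - (s * ⟪g, a - z⟫ + t * ⟪g, b - z⟫))
          ≤ 1 / γ * ((s * ψ a + t * ψ b - s * t * (ρ / 2 * ‖a - b‖ ^ 2)) - ψ z
              - (s * ⟪g, a - z⟫ + t * ⟪g, b - z⟫)) := by
        apply mul_le_mul_of_nonneg_left _ hγ'.le
        linarith
      have h2 : 1 / γ * ((s * ψ a + t * ψ b - s * t * (ρ / 2 * ‖a - b‖ ^ 2)) - ψ z
            - (s * ⟪g, a - z⟫ + t * ⟪g, b - z⟫))
          = s * (1 / γ * (ψ a - ψ z - ⟪g, a - z⟫)) + t * (1 / γ * (ψ b - ψ z - ⟪g, b - z⟫))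
            - 1 / γ * (s * t * (ρ / 2 * ‖a - b‖ ^ 2)) := by
        field_simp
        linear_combination ψ z * hst
      rw [h2] at h1
      refine le_trans (add_le_add (add_le_add le_rfl hcvh) h1) (le_of_eq ?_)
      ring
    have hcomb : Fa ≤ s * Fa + t * Fb - 1 / γ * (s * t * (ρ / 2 * ‖a - b‖ ^ 2)) :=
      le_trans hmin' hub
    have ht' : 0 < t := ht0
    have : t * Fa + t * (ρ / (2 * γ) * ‖a - b‖ ^ 2 * s) ≤ t * Fb := by
      have hexp : 1 / γ * (s * t * (ρ / 2 * ‖a - b‖ ^ 2)) = t * (ρ / (2 * γ) * ‖a - b‖ ^ 2 * s) := by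
        field_simp
      rw [hexp] at hcomb
      have hFa1 : Fa = s * Fa + t * Fa := by rw [← add_mul, hst, one_mul]
      linarith
    have := (mul_le_mul_iff_right₀ ht').mp (by linarith : t * (Fa + ρ / (2 * γ) * ‖a - b‖ ^ 2 * s) ≤ t * Fb)
    linarith
  exact limit_aux key

/-- If `x₁`, `x₂` are the minimizers over `𝒳` of the mirror-descent objectives with linear
parts `w₁`, `w₂` respectively, and `Gᵢ = (z − xᵢ)/γ`, then `‖G₁ − G₂‖ ≤ (1/ρ)‖w₁ − w₂‖`. -/
theorem mirror_descent_generalized_gradient_difference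
    (hd₁ : 0 < d₁) (ρ : ℝ) (hρ : 0 < ρ)
    (ψ : E₁ → ℝ) (gψ : E₁ → E₁)
    (hψdiff : ∀ x, HasGradientAt ψ (gψ x) x)
    (hψsc : StrongConvexOn Set.univ ρ ψ)
    (X : Set E₁) (hXne : X.Nonempty) (hXcl : IsClosed X) (hXcv : Convex ℝ X)
    (h : E₁ → ℝ) (hh : ConvexOn ℝ Set.univ h)
    (z : E₁) (hz : z ∈ X) (γ : ℝ) (hγ : 0 < γ) (w₁ w₂ : E₁)
    (x₁ : E₁) (hx₁ : x₁ ∈ X)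
    (hx₁min : ∀ u ∈ X,
      ⟪w₁, x₁⟫ + h x₁ + 1 / γ * (ψ x₁ - ψ z - ⟪gψ z, x₁ - z⟫) ≤
        ⟪w₁, u⟫ + h u + 1 / γ * (ψ u - ψ z - ⟪gψ z, u - z⟫))
    (x₂ : E₁) (hx₂ : x₂ ∈ X)
    (hx₂min : ∀ u ∈ X,
      ⟪w₂, x₂⟫ + h x₂ + 1 / γ * (ψ x₂ - ψ z - ⟪gψ z, x₂ - z⟫) ≤
        ⟪w₂, u⟫ + h u + 1 / γ * (ψ u - ψ z - ⟪gψ z, u - z⟫)) :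
    ‖(1 / γ) • (z - x₁) - (1 / γ) • (z - x₂)‖ ≤ 1 / ρ * ‖w₁ - w₂‖ := by
  have h1 := min_growth_aux ρ γ hρ hγ ψ hψsc X hXcv h hh w₁ (gψ z) z x₁ x₂ hx₁ hx₂ hx₁min
  have h2 := min_growth_aux ρ γ hρ hγ ψ hψsc X hXcv h hh w₂ (gψ z) z x₂ x₁ hx₂ hx₁ hx₂min
  rw [norm_sub_rev x₂ x₁] at h2
  set n := ‖x₁ - x₂‖ with hn
  have hn0 : 0 ≤ n := norm_nonneg _
  have hkey : ρ / γ * n ^ 2 ≤ ⟪w₁ - w₂, x₂ - x₁⟫ := by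
    have : ⟪w₁, x₂⟫ + ⟪w₂, x₁⟫ - ⟪w₁, x₁⟫ - ⟪w₂, x₂⟫ = ⟪w₁ - w₂, x₂ - x₁⟫ := by
      rw [inner_sub_left, inner_sub_right, inner_sub_right]; ring
    rw [← this]
    have : ρ / (2 * γ) * n ^ 2 + ρ / (2 * γ) * n ^ 2 = ρ / γ * n ^ 2 := by
      field_simp; ring
    linarith
  have hcs : ⟪w₁ - w₂, x₂ - x₁⟫ ≤ ‖w₁ - w₂‖ * n := by
    rw [hn, norm_sub_rev x₁ x₂]
    exact real_inner_le_norm _ _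
  have hLHS : ‖(1 / γ) • (z - x₁) - (1 / γ) • (z - x₂)‖ = 1 / γ * n := by
    rw [← smul_sub, norm_smul]
    congr 1
    · simp [abs_of_pos, hγ, abs_of_nonneg (le_of_lt (by positivity : (0:ℝ) < 1/γ))]
    · rw [hn, ← norm_neg]; congr 1; abel
  rw [hLHS]
  rcases eq_or_lt_of_le hn0 with hn' | hn'
  · rw [← hn']
    have hW : (0:ℝ) ≤ 1 / ρ * ‖w₁ - w₂‖ := by positivity
    simpa using hW
  · have habs : ρ / γ * n ^ 2 ≤ ‖w₁ - w₂‖ * n := le_trans hkey hcs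
    rw [div_mul_eq_mul_div, div_le_iff₀ hγ] at habs
    rw [div_mul_eq_mul_div, div_mul_eq_mul_div, div_le_div_iff₀ hγ hρ]
    nlinarith [habs, hn', mul_pos hn' hn']
end

section
/- Let F : ℝ^{d₁} → ℝ be differentiable with L_F-Lipschitz gradient and Φ = F + h. Let x_t ∈ 𝒳, w, u ∈ ℝ^{d₁}, L_y ≥ 0 and δ ≥ 0 with ‖u − ∇F(x_t)‖ ≤ L_y δ, and 0 < γ ≤ 3ρ/(4L_F). Let x_{t+1} be the unique minimizer over 𝒳 of x ↦ ⟨w, x⟩ + h(x) + (1/γ)D_ψ(x, x_t), let x⁺_{t+1} be the unique minimizer over 𝒳 of x ↦ ⟨∇F(x_t), x⟩ + h(x) + (1/γ)D_ψ(x, x_t), and set G = (x_t − x⁺_{t+1})/γ. Then Φ(x_{t+1}) ≤ Φ(x_t) − (3γρ/16)‖G‖² + (11γ/(4ρ))‖w − u‖² + (11L_y²γ/(4ρ))δ². -/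
open scoped RealInnerProductSpace

variable {d₁ : ℕ}

local notation "E₁" => EuclideanSpace ℝ (Fin d₁)

section Aux

variable {E : Type*} [NormedAddCommGroup E] [InnerProductSpace ℝ E] [CompleteSpace E]

/-- Derivative of a function with a gradient along a line. -/
lemma aux_line_deriv (f : E → ℝ) (g : E → E) (hf : ∀ x, HasGradientAt f (g x) x)
    (z d : E) (t : ℝ) :
    HasDerivAt (fun s : ℝ => f (z + s • d)) ⟪g (z + t • d), d⟫ t := by
  have hline : HasDerivAt (fun s : ℝ => z + s • d) d t := by
    simpa using ((hasDerivAt_id t).smul_const d).const_add z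
  have h1 := (hasGradientAt_iff_hasFDerivAt.1 (hf (z + t • d))).comp_hasDerivAt t hline
  simpa [InnerProductSpace.toDual_apply_apply, Function.comp_def] using h1

/-- First-order inequality for strongly convex differentiable functions. -/
lemma aux_sc_first_order (m : ℝ) (f : E → ℝ) (g : E → E)
    (hf : ∀ x, HasGradientAt f (g x) x) (hsc : StrongConvexOn Set.univ m f) (z x : E) :
    f z + ⟪g z, x - z⟫ + m / 2 * ‖x - z‖ ^ 2 ≤ f x := by
  set d := x - z with hd
  have hphi : HasDerivAt (fun s : ℝ => f (z + s • d)) ⟪g z, d⟫ 0 := by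
    simpa using aux_line_deriv f g hf z d 0
  have hslope : Filter.Tendsto (slope (fun s : ℝ => f (z + s • d)) 0) (nhdsWithin 0 (Set.Ioi 0))
      (nhds ⟪g z, d⟫) :=
    (hasDerivAt_iff_tendsto_slope.1 hphi).mono_left
      (nhdsWithin_mono 0 (fun t ht => ne_of_gt ht))
  have hR : Filter.Tendsto (fun t : ℝ => f x - f z - (1 - t) * (m / 2 * ‖d‖ ^ 2))
      (nhdsWithin 0 (Set.Ioi 0)) (nhds (f x - f z - m / 2 * ‖d‖ ^ 2)) := by
    have hcont : Continuous (fun t : ℝ => f x - f z - (1 - t) * (m / 2 * ‖d‖ ^ 2)) := by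
      continuity
    have h0 := Filter.Tendsto.mono_left (hcont.tendsto 0)
      (nhdsWithin_le_nhds (a := (0:ℝ)) (s := Set.Ioi 0))
    simpa using h0
  have hev : ∀ᶠ t in nhdsWithin (0:ℝ) (Set.Ioi 0),
      slope (fun s : ℝ => f (z + s • d)) 0 t ≤ f x - f z - (1 - t) * (m / 2 * ‖d‖ ^ 2) := by
    filter_upwards [Ioo_mem_nhdsGT_of_mem (by norm_num : (0:ℝ) ∈ Set.Ico (0:ℝ) 1)] with t ht
    have ht0 : 0 < t := ht.1
    have ht1 : t < 1 := ht.2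
    have hcomb : (1 - t) • z + t • x = z + t • d := by
      rw [hd, sub_smul, one_smul, smul_sub]; abel
    have hsc' := hsc.2 (Set.mem_univ z) (Set.mem_univ x)
      (by linarith : (0:ℝ) ≤ 1 - t) (le_of_lt ht0) (by ring)
    rw [hcomb] at hsc'
    have hnorm : ‖z - x‖ = ‖d‖ := by rw [hd, norm_sub_rev]
    rw [hnorm] at hsc'
    simp only [smul_eq_mul] at hsc'
    rw [slope_def_field]
    simp only [zero_smul, add_zero, sub_zero]
    rw [div_le_iff₀ ht0]
    nlinarith [hsc']
  have hle : ⟪g z, d⟫ ≤ f x - f z - m / 2 * ‖d‖ ^ 2 :=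
    le_of_tendsto_of_tendsto hslope hR hev
  linarith

/-- Strong minimality property of minimizers of strongly convex functions on convex sets. -/
lemma aux_min_strong (μ : ℝ) (X : Set E) (hXcv : Convex ℝ X) (f : E → ℝ)
    (hsc : ∀ x ∈ X, ∀ y ∈ X, ∀ a b : ℝ, 0 ≤ a → 0 ≤ b → a + b = 1 →
      f (a • x + b • y) ≤ a * f x + b * f y - a * b * (μ / 2 * ‖x - y‖ ^ 2))
    (xs : E) (hxs : xs ∈ X) (hmin : ∀ z ∈ X, f xs ≤ f z) (z : E) (hz : z ∈ X) :
    f xs + μ / 2 * ‖z - xs‖ ^ 2 ≤ f z := by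
  have key : ∀ t ∈ Set.Ioo (0:ℝ) 1,
      f xs + (1 - t) * (μ / 2 * ‖xs - z‖ ^ 2) ≤ f z := by
    intro t ht
    have ht0 : 0 < t := ht.1
    have hp : (1 - t) • xs + t • z ∈ X :=
      hXcv hxs hz (by linarith [ht.2] : (0:ℝ) ≤ 1 - t) (le_of_lt ht0) (by ring)
    have h1 : f xs ≤ f ((1 - t) • xs + t • z) := hmin _ hp
    have h2 := hsc xs hxs z hz (1 - t) t (by linarith [ht.2]) (le_of_lt ht0) (by ring)
    have h3 : t * (f xs + (1 - t) * (μ / 2 * ‖xs - z‖ ^ 2)) ≤ t * f z := by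
      nlinarith [h1, h2]
    exact le_of_mul_le_mul_left h3 ht0
  have hT : Filter.Tendsto (fun t : ℝ => f xs + (1 - t) * (μ / 2 * ‖xs - z‖ ^ 2))
      (nhdsWithin 0 (Set.Ioi 0)) (nhds (f xs + μ / 2 * ‖xs - z‖ ^ 2)) := by
    have hcont : Continuous (fun t : ℝ => f xs + (1 - t) * (μ / 2 * ‖xs - z‖ ^ 2)) := by
      continuity
    have h0 := Filter.Tendsto.mono_left (hcont.tendsto 0)
      (nhdsWithin_le_nhds (a := (0:ℝ)) (s := Set.Ioi 0))
    simpa using h0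
  have hev : ∀ᶠ t in nhdsWithin (0:ℝ) (Set.Ioi 0),
      f xs + (1 - t) * (μ / 2 * ‖xs - z‖ ^ 2) ≤ f z := by
    filter_upwards [Ioo_mem_nhdsGT_of_mem (by norm_num : (0:ℝ) ∈ Set.Ico (0:ℝ) 1)] with t ht
    exact key t ht
  have hfin := le_of_tendsto hT hev
  have hnorm : ‖z - xs‖ = ‖xs - z‖ := norm_sub_rev _ _
  rw [hnorm]
  linarith

/-- Descent lemma: quadratic upper bound for functions with Lipschitz gradient. -/
lemma aux_smooth_ub (LF : ℝ) (F : E → ℝ) (gradF : E → E)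
    (hF : ∀ x, HasGradientAt F (gradF x) x)
    (hFLip : ∀ x₁ x₂ : E, ‖gradF x₁ - gradF x₂‖ ≤ LF * ‖x₁ - x₂‖) (x y : E) :
    F y ≤ F x + ⟪gradF x, y - x⟫ + LF / 2 * ‖y - x‖ ^ 2 := by
  set d := y - x with hd
  set φ : ℝ → ℝ := fun t => F (x + t • d) - t * ⟪gradF x, d⟫ - LF / 2 * ‖d‖ ^ 2 * t ^ 2 with hφ
  have hφd : ∀ t : ℝ, HasDerivAt φ
      (⟪gradF (x + t • d), d⟫ - ⟪gradF x, d⟫ - LF / 2 * ‖d‖ ^ 2 * (2 * t)) t := by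
    intro t
    have hA := aux_line_deriv F gradF hF x d t
    have hB : HasDerivAt (fun s : ℝ => s * ⟪gradF x, d⟫) ⟪gradF x, d⟫ t := by
      simpa using (hasDerivAt_id t).mul_const (⟪gradF x, d⟫ : ℝ)
    have hC : HasDerivAt (fun s : ℝ => LF / 2 * ‖d‖ ^ 2 * s ^ 2)
        (LF / 2 * ‖d‖ ^ 2 * (2 * t)) t := by
      have h0 := (hasDerivAt_pow 2 t).const_mul (LF / 2 * ‖d‖ ^ 2)
      exact h0.congr_deriv (by norm_num)
    exact (hA.sub hB).sub hC
  have hderiv_nonpos : ∀ t ∈ interior (Set.Icc (0:ℝ) 1), deriv φ t ≤ 0 := by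
    intro t ht
    rw [interior_Icc] at ht
    have ht0 : 0 < t := ht.1
    rw [(hφd t).deriv]
    have h1 : ⟪gradF (x + t • d), d⟫ - ⟪gradF x, d⟫ = ⟪gradF (x + t • d) - gradF x, d⟫ := by
      rw [inner_sub_left]
    have h3 : ‖gradF (x + t • d) - gradF x‖ ≤ LF * (t * ‖d‖) := by
      have h30 := hFLip (x + t • d) x
      simpa [norm_smul, abs_of_pos ht0] using h30
    have h2' : ⟪gradF (x + t • d), d⟫ - ⟪gradF x, d⟫ ≤ LF / 2 * ‖d‖ ^ 2 * (2 * t) := by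
      rw [h1]
      refine le_trans (real_inner_le_norm _ _) ?_
      calc ‖gradF (x + t • d) - gradF x‖ * ‖d‖ ≤ LF * (t * ‖d‖) * ‖d‖ :=
            mul_le_mul_of_nonneg_right h3 (norm_nonneg d)
      _ = LF / 2 * ‖d‖ ^ 2 * (2 * t) := by ring
    linarith
  have hcont : ContinuousOn φ (Set.Icc 0 1) :=
    (fun t _ => ((hφd t).differentiableAt.continuousAt).continuousWithinAt)
  have hdiff : DifferentiableOn ℝ φ (interior (Set.Icc (0:ℝ) 1)) :=
    fun t _ => ((hφd t).differentiableAt).differentiableWithinAt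
  have hanti : AntitoneOn φ (Set.Icc 0 1) :=
    antitoneOn_of_deriv_nonpos (convex_Icc 0 1) hcont hdiff hderiv_nonpos
  have h01 := hanti (Set.mem_Icc.2 ⟨le_refl 0, zero_le_one⟩)
    (Set.mem_Icc.2 ⟨zero_le_one, le_refl 1⟩) zero_le_one
  have hφ0 : φ 0 = F x := by simp [hφ]
  have hφ1 : φ 1 = F y - ⟪gradF x, d⟫ - LF / 2 * ‖d‖ ^ 2 := by
    simp [hφ, hd]
  rw [hφ0, hφ1] at h01
  linarith

end Aux

set_option maxHeartbeats 4000000 in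
/-- One-step descent of `Φ = F + h` in terms of the exact generalized gradient `G`:
`Φ(x_{t+1}) ≤ Φ(x_t) − (3γρ/16)‖G‖² + (11γ/(4ρ))‖w − u‖² + (11L_y²γ/(4ρ))δ²`. -/
theorem mirror_descent_objective_decrease_exact_gradient
    (hd₁ : 0 < d₁) (ρ LF : ℝ) (hρ : 0 < ρ)
    (F : E₁ → ℝ) (gradF : E₁ → E₁)
    (hF : ∀ x, HasGradientAt F (gradF x) x)
    (hFLip : ∀ x₁ x₂ : E₁, ‖gradF x₁ - gradF x₂‖ ≤ LF * ‖x₁ - x₂‖)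
    (ψ : E₁ → ℝ) (gψ : E₁ → E₁)
    (hψdiff : ∀ x, HasGradientAt ψ (gψ x) x)
    (hψsc : StrongConvexOn Set.univ ρ ψ)
    (X : Set E₁) (hXne : X.Nonempty) (hXcl : IsClosed X) (hXcv : Convex ℝ X)
    (h : E₁ → ℝ) (hh : ConvexOn ℝ Set.univ h)
    (xt : E₁) (hxt : xt ∈ X) (w u : E₁)
    (Ly δ : ℝ) (hLy : 0 ≤ Ly) (hδ : 0 ≤ δ)
    (hu : ‖u - gradF xt‖ ≤ Ly * δ)
    (γ : ℝ) (hγ : 0 < γ) (hγLF : γ ≤ 3 * ρ / (4 * LF))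
    (xt1 : E₁) (hxt1 : xt1 ∈ X)
    (hxt1min : ∀ z ∈ X,
      ⟪w, xt1⟫ + h xt1 + 1 / γ * (ψ xt1 - ψ xt - ⟪gψ xt, xt1 - xt⟫) ≤
        ⟪w, z⟫ + h z + 1 / γ * (ψ z - ψ xt - ⟪gψ xt, z - xt⟫))
    (xp : E₁) (hxp : xp ∈ X)
    (hxpmin : ∀ z ∈ X,
      ⟪gradF xt, xp⟫ + h xp + 1 / γ * (ψ xp - ψ xt - ⟪gψ xt, xp - xt⟫) ≤
        ⟪gradF xt, z⟫ + h z + 1 / γ * (ψ z - ψ xt - ⟪gψ xt, z - xt⟫)) :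
    F xt1 + h xt1 ≤
      F xt + h xt - 3 * γ * ρ / 16 * ‖(1 / γ) • (xt - xp)‖ ^ 2 +
        11 * γ / (4 * ρ) * ‖w - u‖ ^ 2 + 11 * Ly ^ 2 * γ / (4 * ρ) * δ ^ 2 := by
  -- LF is positive
  have hLFpos : 0 < LF := by
    by_contra hcon
    push_neg at hcon
    rcases eq_or_lt_of_le hcon with heq | hlt
    · rw [heq, mul_zero, div_zero] at hγLF; linarith
    · have : 3 * ρ / (4 * LF) < 0 :=
        div_neg_of_pos_of_neg (by linarith) (by linarith)
      linarith
  have hLFle : LF ≤ 3 * ρ / (4 * γ) := by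
    rw [le_div_iff₀ (by positivity)] at hγLF ⊢
    nlinarith
  -- strong convexity of the prox objectives
  have comb : ∀ v : E₁, ∀ x ∈ X, ∀ y ∈ X, ∀ a b : ℝ, 0 ≤ a → 0 ≤ b → a + b = 1 →
      (fun q => ⟪v, q⟫ + h q + 1 / γ * (ψ q - ψ xt - ⟪gψ xt, q - xt⟫)) (a • x + b • y) ≤
        a * (fun q => ⟪v, q⟫ + h q + 1 / γ * (ψ q - ψ xt - ⟪gψ xt, q - xt⟫)) x +
        b * (fun q => ⟪v, q⟫ + h q + 1 / γ * (ψ q - ψ xt - ⟪gψ xt, q - xt⟫)) y -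
        a * b * ((ρ / γ) / 2 * ‖x - y‖ ^ 2) := by
    intro v x hx y hy a b ha hb hab
    simp only
    have hψ' := hψsc.2 (Set.mem_univ x) (Set.mem_univ y) ha hb hab
    have hh' := hh.2 (Set.mem_univ x) (Set.mem_univ y) ha hb hab
    simp only [smul_eq_mul] at hψ' hh'
    have hv : ⟪v, a • x + b • y⟫ = a * ⟪v, x⟫ + b * ⟪v, y⟫ := by
      rw [inner_add_right, real_inner_smul_right, real_inner_smul_right]
    have hg : ⟪gψ xt, a • x + b • y - xt⟫ =
        a * ⟪gψ xt, x - xt⟫ + b * ⟪gψ xt, y - xt⟫ := by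
      have hsplit : a • x + b • y - xt = a • (x - xt) + b • (y - xt) := by
        have h0 : a • x + b • y - xt = a • x + b • y - (a + b) • xt := by
          rw [hab, one_smul]
        rw [h0, add_smul, smul_sub, smul_sub]; abel
      rw [hsplit, inner_add_right, real_inner_smul_right, real_inner_smul_right]
    rw [hv, hg]
    obtain rfl : b = 1 - a := by linarith
    have hγinv : (0:ℝ) < 1 / γ := by positivity
    have hψs := mul_le_mul_of_nonneg_left hψ' (le_of_lt hγinv)
    ring_nf at hψs hh' ⊢
    linarith
  -- strong minimality at xt1 and xp
  have hA := aux_min_strong (ρ / γ) X hXcv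
    (fun q => ⟪w, q⟫ + h q + 1 / γ * (ψ q - ψ xt - ⟪gψ xt, q - xt⟫))
    (comb w) xt1 hxt1 hxt1min xt hxt
  have hB := aux_min_strong (ρ / γ) X hXcv
    (fun q => ⟪w, q⟫ + h q + 1 / γ * (ψ q - ψ xt - ⟪gψ xt, q - xt⟫))
    (comb w) xt1 hxt1 hxt1min xp hxp
  have hC := aux_min_strong (ρ / γ) X hXcv
    (fun q => ⟪gradF xt, q⟫ + h q + 1 / γ * (ψ q - ψ xt - ⟪gψ xt, q - xt⟫))
    (comb (gradF xt)) xp hxp hxpmin xt1 hxt1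
  -- notation
  set a := ‖xt1 - xt‖ with ha_def
  set b := ‖xt1 - xp‖ with hb_def
  set c := ‖w - gradF xt‖ with hc_def
  set e := ‖w - u‖ with he_def
  have ha0 : 0 ≤ a := norm_nonneg _
  have hb0 : 0 ≤ b := norm_nonneg _
  have hc0 : 0 ≤ c := norm_nonneg _
  have he0 : 0 ≤ e := norm_nonneg _
  clear_value a b c e
  -- Bregman lower bound
  have hD : ρ / 2 * a ^ 2 ≤ ψ xt1 - ψ xt - ⟪gψ xt, xt1 - xt⟫ := by
    have h0 := aux_sc_first_order ρ ψ gψ hψdiff hψsc xt xt1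
    rw [ha_def]
    linarith
  -- simplify hA
  have hxtxt : (1:ℝ) / γ * (ψ xt - ψ xt - ⟪gψ xt, xt - xt⟫) = 0 := by simp
  rw [hxtxt] at hA
  have hrevA : ‖xt - xt1‖ = a := by rw [ha_def, norm_sub_rev]
  rw [hrevA] at hA
  -- from hA and hD: the prox decrease inequality
  have hγinv : (0:ℝ) < 1 / γ := by positivity
  have hDscaled : 1 / γ * (ρ / 2 * a ^ 2) ≤ 1 / γ * (ψ xt1 - ψ xt - ⟪gψ xt, xt1 - xt⟫) :=
    mul_le_mul_of_nonneg_left hD (le_of_lt hγinv)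
  have fact0 : ⟪w, xt1⟫ + h xt1 + 1 / γ * (ρ / 2 * a ^ 2) + ρ / γ / 2 * a ^ 2 ≤
      ⟪w, xt⟫ + h xt := by linarith
  -- smoothness
  have hS := aux_smooth_ub LF F gradF hF hFLip xt xt1
  rw [← ha_def] at hS
  -- inner product manipulations
  have hi1 : ⟪gradF xt, xt1 - xt⟫ = ⟪gradF xt - w, xt1 - xt⟫ + ⟪w, xt1 - xt⟫ := by
    rw [inner_sub_left]; ring
  have hi2 : (⟪w, xt1 - xt⟫:ℝ) = ⟪w, xt1⟫ - ⟪w, xt⟫ := inner_sub_right _ _ _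
  have hi3 : ⟪gradF xt - w, xt1 - xt⟫ ≤ c * a := by
    calc ⟪gradF xt - w, xt1 - xt⟫ ≤ ‖gradF xt - w‖ * ‖xt1 - xt‖ := real_inner_le_norm _ _
    _ = c * a := by rw [hc_def, ha_def, norm_sub_rev (gradF xt) w]
  have hLFa : LF / 2 * a ^ 2 ≤ 3 * ρ / (8 * γ) * a ^ 2 := by
    have h0 : LF / 2 ≤ 3 * ρ / (8 * γ) := by
      rw [div_le_div_iff₀ (by norm_num : (0:ℝ) < 2) (by positivity : (0:ℝ) < 8 * γ)]
      rw [le_div_iff₀ (by positivity : (0:ℝ) < 4 * γ)] at hLFle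
      nlinarith
    exact mul_le_mul_of_nonneg_right h0 (sq_nonneg a)
  -- main objective decrease with a-term
  have fact1 : F xt1 + h xt1 ≤ F xt + h xt + c * a - 5 * ρ / (8 * γ) * a ^ 2 := by
    ring_nf at hS fact0 hi1 hi2 hi3 hLFa ⊢
    linarith
  -- contraction between xt1 and xp
  have hrevB : ‖xp - xt1‖ = b := by rw [hb_def, norm_sub_rev]
  rw [hrevB] at hB
  have hcontr : ρ / γ * b ^ 2 ≤ c * b := by
    have hiw : (⟪w, xp⟫:ℝ) - ⟪w, xt1⟫ + (⟪gradF xt, xt1⟫ - ⟪gradF xt, xp⟫) =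
        ⟪w - gradF xt, xp - xt1⟫ := by
      rw [inner_sub_left, inner_sub_right, inner_sub_right]; ring
    have hib : (⟪w - gradF xt, xp - xt1⟫:ℝ) ≤ c * b := by
      calc (⟪w - gradF xt, xp - xt1⟫:ℝ) ≤ ‖w - gradF xt‖ * ‖xp - xt1‖ :=
            real_inner_le_norm _ _
      _ = c * b := by rw [hc_def, hrevB]
    ring_nf at hB hC hiw hib ⊢
    linarith
  -- bound on b
  have hble : b ≤ γ / ρ * c := by
    rcases eq_or_lt_of_le hb0 with heq | hlt
    · rw [← heq]; positivity
    · have h1 : ρ / γ * b ≤ c := by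
        have h2 : (ρ / γ * b) * b ≤ c * b := by nlinarith [hcontr]
        exact le_of_mul_le_mul_right h2 hlt
      have h3 := mul_le_mul_of_nonneg_left h1 (by positivity : (0:ℝ) ≤ γ / ρ)
      have h4 : γ / ρ * (ρ / γ * b) = b := by field_simp
      rw [h4] at h3
      exact h3
  -- bound on the gradient mapping norm
  have hGnorm : ‖(1 / γ) • (xt - xp)‖ ^ 2 ≤ (1 / γ) ^ 2 * (a + b) ^ 2 := by
    have h1 : ‖(1 / γ) • (xt - xp)‖ = (1 / γ) * ‖xt - xp‖ := by
      rw [norm_smul, Real.norm_eq_abs, abs_of_pos hγinv]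
    have h2 : ‖xt - xp‖ ≤ a + b := by
      calc ‖xt - xp‖ = ‖(xt - xt1) + (xt1 - xp)‖ := by rw [sub_add_sub_cancel]
      _ ≤ ‖xt - xt1‖ + ‖xt1 - xp‖ := norm_add_le _ _
      _ = a + b := by rw [ha_def, hb_def, norm_sub_rev]
    rw [h1, mul_pow]
    have h3 : ‖xt - xp‖ ^ 2 ≤ (a + b) ^ 2 := by nlinarith [norm_nonneg (xt - xp)]
    exact mul_le_mul_of_nonneg_left h3 (by positivity)
  -- triangle inequality on gradient error
  have hcem : c ≤ e + Ly * δ := by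
    calc c = ‖(w - u) + (u - gradF xt)‖ := by rw [hc_def, sub_add_sub_cancel]
    _ ≤ ‖w - u‖ + ‖u - gradF xt‖ := norm_add_le _ _
    _ ≤ e + Ly * δ := by rw [he_def]; linarith [hu]
  have hm0 : 0 ≤ Ly * δ := mul_nonneg hLy hδ
  -- gradient mapping term bound
  have hGterm : 3 * γ * ρ / 16 * ‖(1 / γ) • (xt - xp)‖ ^ 2 ≤
      3 * ρ / (8 * γ) * a ^ 2 + 3 * γ / (8 * ρ) * c ^ 2 := by
    have hbb : b * b ≤ (γ / ρ * c) * (γ / ρ * c) :=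
      mul_le_mul hble hble hb0 (by positivity)
    have hab2 : (a + b) ^ 2 ≤ 2 * a ^ 2 + 2 * (γ / ρ * c) ^ 2 := by nlinarith [hbb, sq_nonneg (a - b)]
    have h1 : 3 * γ * ρ / 16 * ‖(1 / γ) • (xt - xp)‖ ^ 2 ≤
        3 * γ * ρ / 16 * ((1 / γ) ^ 2 * (2 * a ^ 2 + 2 * (γ / ρ * c) ^ 2)) := by
      apply mul_le_mul_of_nonneg_left _ (by positivity)
      calc ‖(1 / γ) • (xt - xp)‖ ^ 2 ≤ (1 / γ) ^ 2 * (a + b) ^ 2 := hGnorm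
      _ ≤ (1 / γ) ^ 2 * (2 * a ^ 2 + 2 * (γ / ρ * c) ^ 2) :=
          mul_le_mul_of_nonneg_left hab2 (by positivity)
    have hkey : 3 * γ * ρ / 16 * ((1 / γ) ^ 2 * (2 * a ^ 2 + 2 * (γ / ρ * c) ^ 2)) =
        3 * ρ / (8 * γ) * a ^ 2 + 3 * γ / (8 * ρ) * c ^ 2 := by
      field_simp; ring
    rw [hkey] at h1
    exact h1
  -- Young's inequality
  have hYoung : c * a ≤ ρ / (4 * γ) * a ^ 2 + γ / ρ * c ^ 2 := by
    have hid : ρ / (4 * γ) * a ^ 2 + γ / ρ * c ^ 2 - c * a =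
        (ρ * a - 2 * γ * c) ^ 2 / (4 * γ * ρ) := by
      field_simp; ring
    have hnn : (0:ℝ) ≤ (ρ * a - 2 * γ * c) ^ 2 / (4 * γ * ρ) := by positivity
    rw [← hid] at hnn
    linarith
  -- final error bound
  have hcfin : 11 * γ / (8 * ρ) * c ^ 2 ≤ 11 * γ / (4 * ρ) * e ^ 2 +
      11 * Ly ^ 2 * γ / (4 * ρ) * δ ^ 2 := by
    have hc2 : c ^ 2 ≤ 2 * e ^ 2 + 2 * (Ly * δ) ^ 2 := by
      nlinarith [mul_le_mul hcem hcem hc0 (by linarith : (0:ℝ) ≤ e + Ly * δ),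
        sq_nonneg (e - Ly * δ)]
    have h1 := mul_le_mul_of_nonneg_left hc2 (by positivity : (0:ℝ) ≤ 11 * γ / (8 * ρ))
    have hid : 11 * γ / (8 * ρ) * (2 * e ^ 2 + 2 * (Ly * δ) ^ 2) =
        11 * γ / (4 * ρ) * e ^ 2 + 11 * Ly ^ 2 * γ / (4 * ρ) * δ ^ 2 := by
      field_simp; ring
    rw [hid] at h1
    exact h1
  ring_nf at fact1 hGterm hYoung hcfin ⊢
  linarith
end
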